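/- If P and Q are distinct m-variate polynomials of total degree at most d over a field F, and T ⊆ F has size n, then Δ_mult^(s)(Enc^(s)(P), Enc^(s)(Q)) ≥ n^m · (s − d/n). -/

import Mathlib

open MvPolynomial Polynomial

/-- The shift `P(z + a)` of a multivariate polynomial. -/
noncomputable def mshift {F : Type*} [CommRing F] {m : ℕ} (a : Fin m → F)
    (P : MvPolynomial (Fin m) F) : MvPolynomial (Fin m) F :=
  MvPolynomial.bind₁ (fun i => MvPolynomial.X i + MvPolynomial.C (a i)) P

/-- `dminM s R` is the minimum of `s` and the degree of the lowest-degree monomial with a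
nonzero coefficient in `R` (it equals `s` when `R = 0`). -/
noncomputable def dminM {F : Type*} [CommRing F] {m : ℕ} (s : ℕ)
    (R : MvPolynomial (Fin m) F) : ℕ :=
  sInf {k : ℕ | k = s ∨ ∃ e : Fin m →₀ ℕ, (e.sum fun _ j => j) = k ∧
    MvPolynomial.coeff e R ≠ 0}


noncomputable section SZaux

variable {F : Type*} [Field F] {m : ℕ}

/-- minimal total degree of a nonzero monomial (junk value 0 for the zero polynomial) -/
def mmin (R : MvPolynomial (Fin m) F) : ℕ :=
  sInf {k : ℕ | ∃ e : Fin m →₀ ℕ, (e.sum fun _ j => j) = k ∧ MvPolynomial.coeff e R ≠ 0}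

lemma mmin_le {R : MvPolynomial (Fin m) F} {e : Fin m →₀ ℕ}
    (h : MvPolynomial.coeff e R ≠ 0) : mmin R ≤ e.sum fun _ j => j :=
  Nat.sInf_le ⟨e, rfl, h⟩

lemma exists_mmin {R : MvPolynomial (Fin m) F} (h : R ≠ 0) :
    ∃ e : Fin m →₀ ℕ, (e.sum fun _ j => j) = mmin R ∧ MvPolynomial.coeff e R ≠ 0 := by
  have hne : {k : ℕ | ∃ e : Fin m →₀ ℕ, (e.sum fun _ j => j) = k ∧
      MvPolynomial.coeff e R ≠ 0}.Nonempty := by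
    obtain ⟨e, he⟩ := MvPolynomial.ne_zero_iff.1 h
    exact ⟨_, e, rfl, he⟩
  exact Nat.sInf_mem hne

/-- shift only the "tail" variables -/
def tshift (a : Fin m → F) (f : MvPolynomial (Fin (m + 1)) F) : MvPolynomial (Fin (m + 1)) F :=
  bind₁ (Fin.cases (X 0) (fun i => X i.succ + MvPolynomial.C (a i))) f

/-- shift only the "head" variable -/
def hshift (b : F) (f : MvPolynomial (Fin (m + 1)) F) : MvPolynomial (Fin (m + 1)) F :=
  bind₁ (Fin.cases (X 0 + MvPolynomial.C b) (fun i => X i.succ)) f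


lemma mshift_cons (b : F) (a : Fin m → F) (f : MvPolynomial (Fin (m + 1)) F) :
    mshift (Fin.cons b a) f = hshift b (tshift a f) := by
  unfold mshift hshift tshift
  rw [bind₁_bind₁]
  refine congrArg (fun g => bind₁ g f) (funext fun i => ?_)
  refine Fin.cases ?_ (fun j => ?_) i
  · simp [Fin.cons_zero]
  · simp [Fin.cons_succ]

lemma mshift_mshift (a a' : Fin m → F) (f : MvPolynomial (Fin m) F) :
    mshift a (mshift a' f) = mshift (a + a') f := by
  unfold mshift
  rw [bind₁_bind₁]
  refine congrArg (fun g => bind₁ g f) (funext fun i => ?_)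
  simp [add_assoc]

lemma mshift_zero (f : MvPolynomial (Fin m) F) : mshift 0 f = f := by
  unfold mshift
  simp only [Pi.zero_apply, map_zero, add_zero]
  exact AlgHom.congr_fun bind₁_X_left f

lemma mshift_ne_zero {a : Fin m → F} {f : MvPolynomial (Fin m) F} (hf : f ≠ 0) :
    mshift a f ≠ 0 := by
  intro h
  apply hf
  have := congrArg (mshift (-a)) h
  rw [mshift_mshift, neg_add_cancel, mshift_zero] at this
  simpa [mshift] using this

lemma tshift_tshift (a a' : Fin m → F) (f : MvPolynomial (Fin (m + 1)) F) :
    tshift a (tshift a' f) = tshift (a + a') f := by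
  unfold tshift
  rw [bind₁_bind₁]
  refine congrArg (fun g => bind₁ g f) (funext fun i => ?_)
  refine Fin.cases ?_ (fun j => ?_) i
  · simp
  · simp [add_assoc]

lemma tshift_zero (f : MvPolynomial (Fin (m + 1)) F) : tshift 0 f = f := by
  unfold tshift
  have : (Fin.cases (X 0) (fun i => X i.succ + MvPolynomial.C ((0 : Fin m → F) i)) :
      Fin (m + 1) → MvPolynomial (Fin (m + 1)) F) = MvPolynomial.X := by
    funext i
    refine Fin.cases ?_ (fun j => ?_) i <;> simp
  rw [this]
  exact AlgHom.congr_fun bind₁_X_left f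

lemma tshift_ne_zero {a : Fin m → F} {f : MvPolynomial (Fin (m + 1)) F} (hf : f ≠ 0) :
    tshift a f ≠ 0 := by
  intro h
  apply hf
  have := congrArg (tshift (-a)) h
  unfold tshift at this
  rw [← tshift, ← tshift, tshift_tshift, neg_add_cancel, tshift_zero] at this
  simpa [tshift] using this


@[simp] lemma phi_C (r : F) :
    finSuccEquiv F m (MvPolynomial.C r) = Polynomial.C (MvPolynomial.C r) := by
  simp [finSuccEquiv_apply]

lemma phi_tshift (a : Fin m → F) (f : MvPolynomial (Fin (m + 1)) F) :
    finSuccEquiv F m (tshift a f) = (finSuccEquiv F m f).map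
      (bind₁ (fun i => MvPolynomial.X i + MvPolynomial.C (a i)) :
        MvPolynomial (Fin m) F →ₐ[F] MvPolynomial (Fin m) F).toRingHom := by
  have key : RingHom.comp ((finSuccEquiv F m : MvPolynomial (Fin (m + 1)) F ≃ₐ[F]
        Polynomial (MvPolynomial (Fin m) F)).toAlgHom.toRingHom)
        (bind₁ (Fin.cases (MvPolynomial.X 0)
          (fun i => MvPolynomial.X i.succ + MvPolynomial.C (a i)))).toRingHom =
      RingHom.comp (mapRingHom (bind₁ (fun i => MvPolynomial.X i + MvPolynomial.C (a i)) :
          MvPolynomial (Fin m) F →ₐ[F] MvPolynomial (Fin m) F).toRingHom)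
        ((finSuccEquiv F m).toAlgHom.toRingHom) := by
    apply MvPolynomial.ringHom_ext
    · intro r
      simp [phi_C]
    · intro i
      refine Fin.cases ?_ (fun j => ?_) i
      · simp [finSuccEquiv_X_zero]
      · simp [finSuccEquiv_X_succ, phi_C]
  exact RingHom.congr_fun key f

lemma phi_hshift (b : F) (f : MvPolynomial (Fin (m + 1)) F) :
    finSuccEquiv F m (hshift b f) =
      taylor (MvPolynomial.C b) (finSuccEquiv F m f) := by
  rw [taylor_apply]
  have key : RingHom.comp ((finSuccEquiv F m : MvPolynomial (Fin (m + 1)) F ≃ₐ[F]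
        Polynomial (MvPolynomial (Fin m) F)).toAlgHom.toRingHom)
        (bind₁ (Fin.cases (MvPolynomial.X 0 + MvPolynomial.C b)
          (fun i => MvPolynomial.X i.succ))).toRingHom =
      RingHom.comp (eval₂RingHom Polynomial.C
          (Polynomial.X + Polynomial.C (MvPolynomial.C b)))
        ((finSuccEquiv F m).toAlgHom.toRingHom) := by
    apply MvPolynomial.ringHom_ext
    · intro r
      simp [phi_C]
    · intro i
      refine Fin.cases ?_ (fun j => ?_) i
      · simp [finSuccEquiv_X_zero]
      · simp [finSuccEquiv_X_succ, phi_C]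
  have h := RingHom.congr_fun key f
  simpa [Polynomial.comp, hshift] using h

/-- extract the coefficient of `x^e` from a polynomial with `MvPolynomial` coefficients,
coefficientwise in `y`. -/
def sl (e : Fin m →₀ ℕ) (p : Polynomial (MvPolynomial (Fin m) F)) : Polynomial F :=
  Polynomial.ofFinsupp (AddMonoidAlgebra.ofCoeff (p.toFinsupp.coeff.mapRange (MvPolynomial.coeff e) (by simp)))

@[simp] lemma sl_coeff (e : Fin m →₀ ℕ) (p : Polynomial (MvPolynomial (Fin m) F)) (j : ℕ) :
    (sl e p).coeff j = MvPolynomial.coeff e (p.coeff j) := by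
  rcases p with ⟨q⟩
  simp [sl, Polynomial.coeff, Finsupp.mapRange_apply]
  rfl

lemma sl_natDegree_le (e : Fin m →₀ ℕ) (p : Polynomial (MvPolynomial (Fin m) F)) :
    (sl e p).natDegree ≤ p.natDegree := by
  apply natDegree_le_iff_coeff_eq_zero.2
  intro k hk
  rw [sl_coeff, Polynomial.coeff_eq_zero_of_natDegree_lt hk, MvPolynomial.coeff_zero]

lemma sl_hasseDeriv (e : Fin m →₀ ℕ) (p : Polynomial (MvPolynomial (Fin m) F)) (j : ℕ) :
    sl e (hasseDeriv j p) = hasseDeriv j (sl e p) := by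
  ext k
  rw [sl_coeff, hasseDeriv_coeff, hasseDeriv_coeff, sl_coeff]
  rw [← map_natCast (MvPolynomial.C : F →+* MvPolynomial (Fin m) F), MvPolynomial.coeff_C_mul]

lemma sl_taylor (e : Fin m →₀ ℕ) (b : F) (p : Polynomial (MvPolynomial (Fin m) F)) :
    sl e (taylor (MvPolynomial.C b) p) = taylor b (sl e p) := by
  ext j
  rw [sl_coeff, taylor_coeff, taylor_coeff, ← sl_hasseDeriv]
  set q := hasseDeriv j p with hq
  have h1 : q.natDegree < q.natDegree + 1 := Nat.lt_succ_self _
  have h2 : (sl e q).natDegree < q.natDegree + 1 :=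
    lt_of_le_of_lt (sl_natDegree_le e q) h1
  rw [Polynomial.eval_eq_sum_range' h1, Polynomial.eval_eq_sum_range' h2,
    MvPolynomial.coeff_sum]
  apply Finset.sum_congr rfl
  intro k _
  rw [sl_coeff, ← map_pow (MvPolynomial.C : F →+* MvPolynomial (Fin m) F), mul_comm,
    MvPolynomial.coeff_C_mul, mul_comm]


lemma taylor_coeff_rootMultiplicity_ne_zero {w : Polynomial F} (hw : w ≠ 0) (b : F) :
    (taylor b w).coeff (rootMultiplicity b w) ≠ 0 := by
  have hmult : rootMultiplicity b w = (taylor b w).natTrailingDegree := by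
    rw [rootMultiplicity_eq_natTrailingDegree, taylor_apply]
  have htz : taylor b w ≠ 0 := by
    intro h
    apply hw
    have := congrArg (taylor (-b)) h
    rwa [taylor_taylor, neg_add_cancel, taylor_zero, map_zero] at this
  rw [hmult]
  exact trailingCoeff_nonzero_iff_nonzero.2 htz

lemma sum_rootMultiplicity_le {w : Polynomial F} (hw : w ≠ 0) (T : Finset F) :
    ∑ b ∈ T, rootMultiplicity b w ≤ w.natDegree := by
  classical
  calc ∑ b ∈ T, rootMultiplicity b w
      = ∑ b ∈ T, w.roots.count b := by
        refine Finset.sum_congr rfl fun b _ => ?_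
        rw [count_roots]
    _ ≤ ∑ b ∈ T ∪ w.roots.toFinset, w.roots.count b :=
        Finset.sum_le_sum_of_subset Finset.subset_union_left
    _ = ∑ b ∈ w.roots.toFinset, w.roots.count b := by
        refine (Finset.sum_subset Finset.subset_union_right fun b _ hb => ?_).symm
        exact Multiset.count_eq_zero.2 (fun hmem => hb (Multiset.mem_toFinset.2 hmem))
    _ = Multiset.card w.roots := w.roots.toFinset_sum_count_eq
    _ ≤ w.natDegree := w.card_roots'

lemma finsupp_cons_degree (r : ℕ) (e : Fin m →₀ ℕ) :
    ((e.cons r).sum fun _ j => j) = r + (e.sum fun _ j => j) := by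
  classical
  rw [Finsupp.sum_fintype _ _ (fun _ => rfl), Finsupp.sum_fintype _ _ (fun _ => rfl)]
  rw [Fin.sum_univ_succ]
  simp [Finsupp.cons_zero, Finsupp.cons_succ]

lemma sum_piFinset_cons {M : Type*} [AddCommMonoid M] (T : Finset F)
    (g : (Fin (m + 1) → F) → M) :
    ∑ v ∈ Fintype.piFinset (fun _ : Fin (m + 1) => T), g v =
      ∑ b ∈ T, ∑ a ∈ Fintype.piFinset (fun _ : Fin m => T), g (Fin.cons b a) := by
  classical
  rw [← Finset.sum_product']
  refine Finset.sum_nbij' (fun v => (v 0, Fin.tail v)) (fun p => Fin.cons p.1 p.2) ?_ ?_ ?_ ?_ ?_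
  · intro v hv
    rw [Fintype.mem_piFinset] at hv
    refine Finset.mem_product.2 ⟨hv 0, ?_⟩
    rw [Fintype.mem_piFinset]
    exact fun i => hv i.succ
  · intro p hp
    rw [Finset.mem_product] at hp
    rw [Fintype.mem_piFinset]
    intro i
    refine Fin.cases ?_ (fun j => ?_) i
    · simpa using hp.1
    · have := Fintype.mem_piFinset.1 hp.2 j
      simpa using this
  · intro v _
    exact Fin.cons_self_tail v
  · intro p _
    simp
  · intro v _
    rw [Fin.cons_self_tail]


lemma mshift_injective (a : Fin m → F) :
    Function.Injective (mshift a : MvPolynomial (Fin m) F → MvPolynomial (Fin m) F) := by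
  intro x y h
  by_contra hxy
  apply mshift_ne_zero (a := a) (sub_ne_zero.2 hxy)
  show (bind₁ fun i => MvPolynomial.X i + MvPolynomial.C (a i)) (x - y) = 0
  rw [map_sub, sub_eq_zero]
  exact h

lemma claim_per_a (f : MvPolynomial (Fin (m + 1)) F) (hf : f ≠ 0) (a : Fin m → F)
    (T : Finset F) :
    ∑ b ∈ T, mmin (mshift (Fin.cons b a) f) ≤
      T.card * mmin (mshift a ((finSuccEquiv F m f).coeff (finSuccEquiv F m f).natDegree)) +
        (finSuccEquiv F m f).natDegree := by
  classical
  set p := finSuccEquiv F m f with hp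
  set t := p.natDegree with ht
  have hpne : p ≠ 0 := by
    rw [hp]
    exact fun h => hf (by simpa using congrArg (finSuccEquiv F m).symm h)
  have hPt : p.coeff t ≠ 0 := by
    rw [ht]
    exact fun h => hpne (leadingCoeff_eq_zero.1 h)
  have hg : tshift a f ≠ 0 := tshift_ne_zero hf
  have hφg : finSuccEquiv F m (tshift a f) = p.map
      (bind₁ (fun i => MvPolynomial.X i + MvPolynomial.C (a i)) :
        MvPolynomial (Fin m) F →ₐ[F] MvPolynomial (Fin m) F).toRingHom := phi_tshift a f
  have hφgdeg : (finSuccEquiv F m (tshift a f)).natDegree = t := by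
    rw [hφg]
    exact natDegree_map_eq_of_injective (mshift_injective a) p
  have hφglead : (finSuccEquiv F m (tshift a f)).coeff t = mshift a (p.coeff t) := by
    rw [hφg, Polynomial.coeff_map]
    rfl
  -- the set of x-degrees of monomials of `tshift a f`
  set S : Set ℕ := {k : ℕ | ∃ (j : ℕ) (e : Fin m →₀ ℕ), (e.sum fun _ j => j) = k ∧
    MvPolynomial.coeff (e.cons j) (tshift a f) ≠ 0} with hS
  have hSne : S.Nonempty := by
    obtain ⟨u, hu⟩ := MvPolynomial.ne_zero_iff.1 hg
    refine ⟨(Finsupp.tail u).sum fun _ j => j, u 0, Finsupp.tail u, rfl, ?_⟩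
    rwa [Finsupp.cons_tail]
  set μ := sInf S with hμ
  obtain ⟨j₀, e₀, he₀sum, he₀⟩ := Nat.sInf_mem hSne
  -- μ is at most the min-degree of the shifted leading coefficient
  have hμle : μ ≤ mmin (mshift a (p.coeff t)) := by
    obtain ⟨e', he'sum, he'⟩ := exists_mmin (mshift_ne_zero (a := a) hPt)
    rw [← hφglead, finSuccEquiv_coeff_coeff] at he'
    rw [← he'sum]
    exact Nat.sInf_le ⟨t, e', rfl, he'⟩
  -- the witness polynomial
  set w : Polynomial F := sl e₀ (finSuccEquiv F m (tshift a f)) with hw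
  have hwne : w ≠ 0 := by
    intro h
    apply he₀
    have := congrArg (fun q => Polynomial.coeff q j₀) h
    simp only [hw, sl_coeff, Polynomial.coeff_zero] at this
    rwa [finSuccEquiv_coeff_coeff] at this
  have hwdeg : w.natDegree ≤ t := le_trans (sl_natDegree_le _ _) (le_of_eq hφgdeg)
  -- pointwise bound
  have key : ∀ b ∈ T, mmin (mshift (Fin.cons b a) f) ≤ μ + rootMultiplicity b w := by
    intro b _
    have hco : MvPolynomial.coeff (e₀.cons (rootMultiplicity b w))
        (mshift (Fin.cons b a) f) = (taylor b w).coeff (rootMultiplicity b w) := by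
      rw [mshift_cons, ← finSuccEquiv_coeff_coeff, phi_hshift, ← sl_coeff, sl_taylor]
    have h1 : MvPolynomial.coeff (e₀.cons (rootMultiplicity b w))
        (mshift (Fin.cons b a) f) ≠ 0 := by
      rw [hco]
      exact taylor_coeff_rootMultiplicity_ne_zero hwne b
    have h2 := mmin_le h1
    rw [finsupp_cons_degree, he₀sum] at h2
    rw [hμ]
    omega
  calc ∑ b ∈ T, mmin (mshift (Fin.cons b a) f)
      ≤ ∑ b ∈ T, (μ + rootMultiplicity b w) := Finset.sum_le_sum key
    _ = T.card * μ + ∑ b ∈ T, rootMultiplicity b w := by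
        rw [Finset.sum_add_distrib, Finset.sum_const, smul_eq_mul]
    _ ≤ T.card * mmin (mshift a (p.coeff t)) + t := by
        refine add_le_add (Nat.mul_le_mul_left _ hμle) ?_
        exact le_trans (sum_rootMultiplicity_le hwne T) hwdeg

theorem SZ_core (m : ℕ) (f : MvPolynomial (Fin m) F) (hf : f ≠ 0) (T : Finset F) :
    T.card * ∑ a ∈ Fintype.piFinset (fun _ : Fin m => T), mmin (mshift a f) ≤
      f.totalDegree * T.card ^ m := by
  classical
  induction m with
  | zero =>
    have : ∑ a ∈ Fintype.piFinset (fun _ : Fin 0 => T), mmin (mshift a f) = 0 := by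
      refine Finset.sum_eq_zero fun a _ => ?_
      have h := mshift_ne_zero (a := a) hf
      obtain ⟨e, he⟩ := MvPolynomial.ne_zero_iff.1 h
      have hz : (e.sum fun _ j => j) = 0 := by
        have : e = 0 := Subsingleton.elim e 0
        simp [this]
      have h0 := mmin_le he
      rw [hz] at h0
      exact Nat.le_zero.1 h0
    rw [this, Nat.mul_zero]
    exact Nat.zero_le _
  | succ m ih =>
    set p := finSuccEquiv F m f with hp
    set t := p.natDegree with ht
    have hpne : p ≠ 0 := by
      rw [hp]
      exact fun h => hf (by simpa using congrArg (finSuccEquiv F m).symm h)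
    have hPt : p.coeff t ≠ 0 := by
      rw [ht]
      exact fun h => hpne (leadingCoeff_eq_zero.1 h)
    have hdeg : (p.coeff t).totalDegree + t ≤ f.totalDegree :=
      totalDegree_coeff_finSuccEquiv_add_le f t hPt
    rw [sum_piFinset_cons, Finset.sum_comm]
    have step1 : ∑ a ∈ Fintype.piFinset (fun _ : Fin m => T),
        ∑ b ∈ T, mmin (mshift (Fin.cons b a) f) ≤
        ∑ a ∈ Fintype.piFinset (fun _ : Fin m => T),
          (T.card * mmin (mshift a (p.coeff t)) + t) :=
      Finset.sum_le_sum fun a _ => claim_per_a f hf a T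
    have step2 : ∑ a ∈ Fintype.piFinset (fun _ : Fin m => T),
        (T.card * mmin (mshift a (p.coeff t)) + t) =
        T.card * (∑ a ∈ Fintype.piFinset (fun _ : Fin m => T),
          mmin (mshift a (p.coeff t))) + T.card ^ m * t := by
      rw [Finset.sum_add_distrib, Finset.sum_const, ← Finset.mul_sum, smul_eq_mul,
        Fintype.card_piFinset_const]
    have step3 := ih (p.coeff t) hPt
    calc T.card * ∑ a ∈ Fintype.piFinset (fun _ : Fin m => T),
          ∑ b ∈ T, mmin (mshift (Fin.cons b a) f)
        ≤ T.card * (T.card * (∑ a ∈ Fintype.piFinset (fun _ : Fin m => T),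
            mmin (mshift a (p.coeff t))) + T.card ^ m * t) := by
          refine Nat.mul_le_mul_left _ ?_
          rw [← step2]
          exact step1
      _ = T.card * (T.card * (∑ a ∈ Fintype.piFinset (fun _ : Fin m => T),
            mmin (mshift a (p.coeff t)))) + T.card ^ m * t * T.card := by ring
      _ ≤ T.card * ((p.coeff t).totalDegree * T.card ^ m) + T.card ^ m * t * T.card := by
          exact Nat.add_le_add_right (Nat.mul_le_mul_left _ step3) _
      _ = ((p.coeff t).totalDegree + t) * T.card ^ (m + 1) := by ring
      _ ≤ f.totalDegree * T.card ^ (m + 1) := Nat.mul_le_mul_right _ hdeg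

end SZaux

/-- Distance of multivariate multiplicity codes: two distinct polynomials of total degree
at most `d` have multiplicity distance at least `n^m (s - d/n)` between their order-`s`
encodings on the grid `T^m`, where `n = |T|`. -/
theorem multiplicity_code_distance {F : Type*} [Field F] {m s d : ℕ}
    (T : Finset F) (P Q : MvPolynomial (Fin m) F) (hne : P ≠ Q)
    (hPdeg : P.totalDegree ≤ d) (hQdeg : Q.totalDegree ≤ d) :
    ((∑ a ∈ Fintype.piFinset (fun _ : Fin m => T),
        (s - dminM s (mshift a P - mshift a Q)) : ℕ) : ℚ) ≥
      (T.card : ℚ) ^ m * ((s : ℚ) - (d : ℚ) / (T.card : ℚ)) := by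
  classical
  have hf : P - Q ≠ 0 := sub_ne_zero.2 hne
  have hfd : (P - Q).totalDegree ≤ d := by
    refine le_trans ?_ (max_le hPdeg hQdeg)
    rw [sub_eq_add_neg]
    refine le_trans (totalDegree_add _ _) ?_
    rw [totalDegree_neg]
  have hsub : ∀ a : Fin m → F, mshift a P - mshift a Q = mshift a (P - Q) := by
    intro a
    show _ = (bind₁ fun i => MvPolynomial.X i + MvPolynomial.C (a i)) (P - Q)
    rw [map_sub]
    rfl
  have hd_le_s : ∀ (R : MvPolynomial (Fin m) F), dminM s R ≤ s :=
    fun R => Nat.sInf_le (Or.inl rfl)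
  have hd_le_mmin : ∀ R : MvPolynomial (Fin m) F, R ≠ 0 → dminM s R ≤ mmin R := by
    intro R hR
    obtain ⟨e, hes, he⟩ := exists_mmin hR
    exact Nat.sInf_le (Or.inr ⟨e, hes, he⟩)
  rcases Nat.eq_zero_or_pos T.card with hT0 | hTpos
  · have hTe : T = ∅ := Finset.card_eq_zero.1 hT0
    cases m with
    | zero =>
      have hterm : ∀ a ∈ Fintype.piFinset (fun _ : Fin 0 => T),
          (s - dminM s (mshift a P - mshift a Q)) = s := by
        intro a _
        have h0 : dminM s (mshift a P - mshift a Q) = 0 := by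
          rw [hsub a]
          obtain ⟨e, he⟩ := MvPolynomial.ne_zero_iff.1 (mshift_ne_zero (a := a) hf)
          have he0 : (e.sum fun _ j => j) = 0 := by
            have : e = 0 := Subsingleton.elim e 0
            simp [this]
          exact Nat.le_zero.1 (Nat.sInf_le (Or.inr ⟨e, he0, he⟩))
        rw [h0, Nat.sub_zero]
      rw [Finset.sum_congr rfl hterm, Finset.sum_const, Fintype.card_piFinset_const]
      rw [hT0]
      simp
    | succ m =>
      have hA : Fintype.piFinset (fun _ : Fin (m + 1) => T) = ∅ := by
        refine Finset.eq_empty_of_forall_notMem fun v hv => ?_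
        have := Fintype.mem_piFinset.1 hv 0
        simp [hTe] at this
      rw [hA, Finset.sum_empty, hT0]
      simp
  · have hn : (0 : ℚ) < (T.card : ℚ) := by exact_mod_cast hTpos
    set A := Fintype.piFinset (fun _ : Fin m => T) with hA
    have hcast : ((∑ a ∈ A, (s - dminM s (mshift a P - mshift a Q)) : ℕ) : ℚ)
        = ∑ a ∈ A, ((s : ℚ) - (dminM s (mshift a (P - Q)) : ℚ)) := by
      rw [Nat.cast_sum]
      refine Finset.sum_congr rfl fun a _ => ?_
      rw [hsub a, Nat.cast_sub (hd_le_s _)]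
    have hsplit : ∑ a ∈ A, ((s : ℚ) - (dminM s (mshift a (P - Q)) : ℚ)) =
        (T.card : ℚ) ^ m * (s : ℚ) - ∑ a ∈ A, (dminM s (mshift a (P - Q)) : ℚ) := by
      rw [Finset.sum_sub_distrib, Finset.sum_const, hA, Fintype.card_piFinset_const]
      push_cast
      ring
    have h1 : T.card * ∑ a ∈ A, dminM s (mshift a (P - Q)) ≤ d * T.card ^ m := by
      calc T.card * ∑ a ∈ A, dminM s (mshift a (P - Q))
          ≤ T.card * ∑ a ∈ A, mmin (mshift a (P - Q)) :=
            Nat.mul_le_mul_left _ (Finset.sum_le_sum fun a _ =>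
              hd_le_mmin _ (mshift_ne_zero hf))
        _ ≤ (P - Q).totalDegree * T.card ^ m := SZ_core m (P - Q) hf T
        _ ≤ d * T.card ^ m := Nat.mul_le_mul_right _ hfd
    have h2 : (T.card : ℚ) * ∑ a ∈ A, (dminM s (mshift a (P - Q)) : ℚ) ≤
        (d : ℚ) * (T.card : ℚ) ^ m := by
      have := (Nat.cast_le (α := ℚ)).2 h1
      push_cast at this
      convert this using 2
    have h3 : ∑ a ∈ A, (dminM s (mshift a (P - Q)) : ℚ) ≤
        (d : ℚ) * (T.card : ℚ) ^ m / (T.card : ℚ) := by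
      rw [le_div_iff₀ hn]
      linarith [h2]
    have h4 : (T.card : ℚ) ^ m * ((s : ℚ) - (d : ℚ) / (T.card : ℚ)) =
        (T.card : ℚ) ^ m * (s : ℚ) - (d : ℚ) * (T.card : ℚ) ^ m / (T.card : ℚ) := by
      field_simp
    rw [ge_iff_le, hcast, hsplit, h4]
    linarith [h3]
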